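/- For the Cox–Ingersoll–Ross family on an interval [c,d] with 0 < c < d < α and parameter m > 0, the function η(m,x) = (d−c)·(∫_c^x y^{−2αm} e^{2my} dy)/(∫_c^d y^{−2αm} e^{2my} dy) + c is, for every fixed x ∈ (c,d), a strictly increasing function of m. -/

import Mathlib

open Set intervalIntegral

theorem CIR_mean_exit_strictMono (α c d : ℝ)
    (hc : 0 < c) (hcd : c < d) (hdα : d < α) :
    ∀ x ∈ Ioo c d,
      StrictMonoOn (fun m =>
        (d - c) *
          ((∫ y in c..x, y ^ (-(2 * α * m)) * Real.exp (2 * m * y)) /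
            (∫ y in c..d, y ^ (-(2 * α * m)) * Real.exp (2 * m * y))) + c)
        (Ioi (0 : ℝ)) := by
  rintro x ⟨hcx, hxd⟩
  have hcα : (0:ℝ) < α := lt_trans hc (lt_trans hcd hdα)
  set g : ℝ → ℝ := fun y => 2 * y - 2 * α * Real.log y with hgdef
  -- continuity of g on Icc c d
  have hgc : ContinuousOn g (Icc c d) := by
    apply ContinuousOn.sub
    · exact (continuous_const.mul continuous_id).continuousOn
    · apply continuousOn_const.mul
      apply Real.continuousOn_log.mono
      intro y hy
      exact ne_of_gt (lt_of_lt_of_le hc hy.1)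
  -- g is strictly decreasing on Icc c d
  have hganti : StrictAntiOn g (Icc c d) := by
    apply strictAntiOn_of_deriv_neg (convex_Icc c d) hgc
    intro y hy
    rw [interior_Icc] at hy
    have hy0 : 0 < y := lt_trans hc hy.1
    have hder : HasDerivAt g (2 - 2 * α * y⁻¹) y := by
      have h1 : HasDerivAt (fun y : ℝ => 2 * y) 2 y := by
        simpa using (hasDerivAt_id y).const_mul (2:ℝ)
      have h2 : HasDerivAt (fun y : ℝ => 2 * α * Real.log y) (2 * α * y⁻¹) y :=
        (Real.hasDerivAt_log (ne_of_gt hy0)).const_mul (2 * α)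
      exact h1.sub h2
    rw [hder.deriv]
    have hyα : y < α := lt_trans hy.2 hdα
    have : (2:ℝ) < 2 * α * y⁻¹ := by
      have h : 2 * α * y⁻¹ = 2 * α / y := by ring
      rw [h, lt_div_iff₀ hy0]
      nlinarith
    linarith
  -- continuity / integrability of the exponential density
  have hF : ∀ (m a b : ℝ), a ∈ Icc c d → b ∈ Icc c d →
      IntervalIntegrable (fun y => Real.exp (m * g y)) MeasureTheory.volume a b := by
    intro m a b ha hb
    apply ContinuousOn.intervalIntegrable
    apply ContinuousOn.rexp
    exact (continuousOn_const.mul (hgc.mono (uIcc_subset_Icc ha hb)))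
  have hxmem : x ∈ Icc c d := ⟨le_of_lt hcx, le_of_lt hxd⟩
  have hcmem : c ∈ Icc c d := ⟨le_refl c, le_of_lt hcd⟩
  have hdmem : d ∈ Icc c d := ⟨le_of_lt hcd, le_refl d⟩
  -- rewrite the integrand
  have hcongr : ∀ (m a b : ℝ), a ∈ Icc c d → b ∈ Icc c d →
      (∫ y in a..b, y ^ (-(2 * α * m)) * Real.exp (2 * m * y)) =
      ∫ y in a..b, Real.exp (m * g y) := by
    intro m a b ha hb
    apply intervalIntegral.integral_congr
    intro y hy
    have hy0 : 0 < y := lt_of_lt_of_le hc ((uIcc_subset_Icc ha hb) hy).1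
    show y ^ (-(2 * α * m)) * Real.exp (2 * m * y) = Real.exp (m * g y)
    rw [Real.rpow_def_of_pos hy0, ← Real.exp_add]
    congr 1
    simp only [hgdef]
    ring
  -- positivity of integrals
  have hpos : ∀ (m a b : ℝ), a ∈ Icc c d → b ∈ Icc c d → a < b →
      0 < ∫ y in a..b, Real.exp (m * g y) := by
    intro m a b ha hb hab
    exact intervalIntegral.intervalIntegral_pos_of_pos_on (hF m a b ha hb)
      (fun y _ => Real.exp_pos _) hab
  intro m₁ hm₁ m₂ hm₂ hm₁₂
  simp only
  rw [hcongr m₁ c x hcmem hxmem, hcongr m₁ c d hcmem hdmem,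
      hcongr m₂ c x hcmem hxmem, hcongr m₂ c d hcmem hdmem]
  set A₁ := ∫ y in c..x, Real.exp (m₁ * g y) with hA1
  set A₂ := ∫ y in c..x, Real.exp (m₂ * g y) with hA2
  set B₁ := ∫ y in x..d, Real.exp (m₁ * g y) with hB1
  set B₂ := ∫ y in x..d, Real.exp (m₂ * g y) with hB2
  have hT1 : (∫ y in c..d, Real.exp (m₁ * g y)) = A₁ + B₁ :=
    (intervalIntegral.integral_add_adjacent_intervals
      (hF m₁ c x hcmem hxmem) (hF m₁ x d hxmem hdmem)).symm
  have hT2 : (∫ y in c..d, Real.exp (m₂ * g y)) = A₂ + B₂ :=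
    (intervalIntegral.integral_add_adjacent_intervals
      (hF m₂ c x hcmem hxmem) (hF m₂ x d hxmem hdmem)).symm
  rw [hT1, hT2]
  have hA1pos : 0 < A₁ := hpos m₁ c x hcmem hxmem hcx
  have hA2pos : 0 < A₂ := hpos m₂ c x hcmem hxmem hcx
  have hB1pos : 0 < B₁ := hpos m₁ x d hxmem hdmem hxd
  have hB2pos : 0 < B₂ := hpos m₂ x d hxmem hdmem hxd
  set δ := m₂ - m₁ with hδ
  have hδpos : 0 < δ := sub_pos.mpr hm₁₂
  set e := Real.exp (δ * g x) with he
  have hepos : 0 < e := Real.exp_pos _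
  -- key pointwise computations
  have hsplit : ∀ y : ℝ, Real.exp (m₂ * g y) = Real.exp (m₁ * g y) * Real.exp (δ * g y) := by
    intro y
    rw [← Real.exp_add]
    congr 1
    simp only [hδ]; ring
  -- A₂ > e * A₁
  have hAkey : e * A₁ < A₂ := by
    have h0 : 0 < ∫ y in c..x,
        (Real.exp (m₂ * g y) - e * Real.exp (m₁ * g y)) := by
      apply intervalIntegral.intervalIntegral_pos_of_pos_on
      · exact (hF m₂ c x hcmem hxmem).sub (((hF m₁ c x hcmem hxmem)).const_mul e)
      · intro y hy
        have hymem : y ∈ Icc c d := ⟨le_of_lt hy.1, le_of_lt (lt_trans hy.2 hxd)⟩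
        have hgy : g x < g y := hganti hymem hxmem hy.2
        rw [hsplit y, sub_pos, he, mul_comm e]
        apply mul_lt_mul_of_pos_left _ (Real.exp_pos _)
        exact Real.exp_lt_exp.mpr (mul_lt_mul_of_pos_left hgy hδpos)
      · exact hcx
    rw [intervalIntegral.integral_sub (hF m₂ c x hcmem hxmem)
        ((hF m₁ c x hcmem hxmem).const_mul e),
        intervalIntegral.integral_const_mul] at h0
    linarith [h0]
  -- B₂ < e * B₁
  have hBkey : B₂ < e * B₁ := by
    have h0 : 0 < ∫ y in x..d,
        (e * Real.exp (m₁ * g y) - Real.exp (m₂ * g y)) := by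
      apply intervalIntegral.intervalIntegral_pos_of_pos_on
      · exact ((hF m₁ x d hxmem hdmem).const_mul e).sub (hF m₂ x d hxmem hdmem)
      · intro y hy
        have hymem : y ∈ Icc c d := ⟨le_of_lt (lt_trans hcx hy.1), le_of_lt hy.2⟩
        have hgy : g y < g x := hganti hxmem hymem hy.1
        rw [hsplit y, sub_pos, he, mul_comm e]
        apply mul_lt_mul_of_pos_left _ (Real.exp_pos _)
        exact Real.exp_lt_exp.mpr (mul_lt_mul_of_pos_left hgy hδpos)
      · exact hxd
    rw [intervalIntegral.integral_sub ((hF m₁ x d hxmem hdmem).const_mul e)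
        (hF m₂ x d hxmem hdmem),
        intervalIntegral.integral_const_mul] at h0
    linarith [h0]
  -- conclude
  have hdiv : A₁ / (A₁ + B₁) < A₂ / (A₂ + B₂) := by
    rw [div_lt_div_iff₀ (by linarith) (by linarith)]
    nlinarith [mul_lt_mul_of_pos_right hAkey hB1pos,
      mul_lt_mul_of_pos_left hBkey hA1pos]
  have hdc : 0 < d - c := sub_pos.mpr hcd
  nlinarith [mul_lt_mul_of_pos_left hdiv hdc]
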